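/- (Theorem 3.3, closed network) Fix N ∈ ℕ. Suppose the symmetry conditions hold: β_{kl}(n_k,n_l;j) = β_{lk}(n_l+1,n_k−1;j) for all j and all k ≠ l with k ≠ j, l ≠ j and n_k ≥ 1; θ_{jk}(n_j,n_k) = θ_{kj}(n_k+1,n_j−1) for all k ≠ j with n_j ≥ 1; and τ_{jj'}(n) = τ_{j'j}(n) for all j ≠ j'. Then on the set {(j,n) : j ∈ Λ, n : Λ → ℕ, |n| = N} the probabilities π(j,n) = γ̄_j(n_j)/Ξ_{N,Λ}, where Ξ_{N,Λ} = Σ_{n : |n| = N} Σ_{l∈Λ} γ̄_l(n_l), satisfy the detailed balance equations: (i) π(j,n)·β_{kl}(n_k,n_l;j) = π(j, n+e^{k→l})·β_{lk}(n_l+1,n_k−1;j) for k ≠ j, l ≠ j, k ≠ l, n_k ≥ 1; (ii) π(j,n)·θ_{jk}(n_j,n_k) = π(j, n+e^{j→k})·θ_{kj}(n_k+1,n_j−1)·γ_j(n_j−1) for k ≠ j, n_j ≥ 1; (iii) π(j,n)·θ_{kj}(n_k,n_j)·γ_j(n_j) = π(j, n+e^{k→j})·θ_{jk}(n_j+1,n_k−1)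 for k ≠ j, n_k ≥ 1; (iv) π(j,n)·γ̄_j(n_j)^{−1}·τ_{jj'}(n) = π(j',n)·γ̄_{j'}(n_{j'})^{−1}·τ_{j'j}(n) for j' ≠ j. -/

import Mathlib

/-- The `e^k` configuration increment: `n + e^k`. -/
def bump {Λ : Type*} [DecidableEq Λ] (n : Λ → ℕ) (k : Λ) : Λ → ℕ :=
  fun l => n l + (if l = k then 1 else 0)

/-- The jump move `n + e^{i→k} = n - e^i + e^k`. -/
def move {Λ : Type*} [DecidableEq Λ] (n : Λ → ℕ) (i k : Λ) : Λ → ℕ :=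
  fun l => n l - (if l = i then 1 else 0) + (if l = k then 1 else 0)

lemma move_sum {Λ : Type*} [Fintype Λ] [DecidableEq Λ] (n : Λ → ℕ) (i k : Λ)
    (hik : i ≠ k) (hi : 1 ≤ n i) : ∑ s, move n i k s = ∑ s, n s := by
  have key : ∀ s, move n i k s + (if s = i then 1 else 0)
      = n s + (if s = k then 1 else 0) := by
    intro s
    by_cases hs : s = i
    · subst hs
      simp [move, hik, Nat.sub_add_cancel hi]
    · simp [move, hs]
  have h2 : ∑ s, (move n i k s + (if s = i then 1 else 0))
      = ∑ s, (n s + (if s = k then 1 else 0)) := Fintype.sum_congr _ _ key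
  rw [Finset.sum_add_distrib, Finset.sum_add_distrib] at h2
  simpa using h2

/-- Theorem 3.3, closed network: under the symmetry conditions, on
`{(j,n) : |n| = N}` the probabilities `π(j,n) = γ̄_j(n_j)/Ξ_{N,Λ}` satisfy the
detailed balance equations. -/
theorem closed_rw_jackson_detailed_balance
    (Λ : Type*) [Fintype Λ] [DecidableEq Λ] [Nonempty Λ] (N : ℕ)
    (gam : Λ → ℕ → ℝ)
    (hgam : ∀ i m, 0 < gam i m) (hgam0 : ∀ i, gam i 0 = 1)
    (gamBar : Λ → ℕ → ℝ)
    (hgamBar : ∀ i m, gamBar i m = ∏ u ∈ Finset.range m, gam i u)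
    (β : Λ → Λ → ℕ → ℕ → Λ → ℝ) (θ : Λ → Λ → ℕ → ℕ → ℝ) (τ : Λ → Λ → (Λ → ℕ) → ℝ)
    (hβnn : ∀ k l a b j, 0 ≤ β k l a b j) (hθnn : ∀ j k a b, 0 ≤ θ j k a b)
    (hτnn : ∀ j j' n, 0 ≤ τ j j' n)
    -- symmetry conditions
    (hβ : ∀ (k l j : Λ) (a b : ℕ), k ≠ l → k ≠ j → l ≠ j → 1 ≤ a →
      β k l a b j = β l k (b + 1) (a - 1) j)
    (hθ : ∀ (j k : Λ) (a b : ℕ), k ≠ j → 1 ≤ a →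
      θ j k a b = θ k j (b + 1) (a - 1))
    (hτ : ∀ (j j' : Λ) (n : Λ → ℕ), j ≠ j' → τ j j' n = τ j' j n)
    (Ξ : ℝ)
    (hΞ : Ξ = ∑' n : {n : Λ → ℕ // ∑ s, n s = N}, ∑ l, gamBar l (n.1 l))
    (π : Λ → (Λ → ℕ) → ℝ)
    (hπ : ∀ (j : Λ) (n : Λ → ℕ), ∑ s, n s = N → π j n = gamBar j (n j) / Ξ) :
    ∀ (j : Λ) (n : Λ → ℕ), ∑ s, n s = N →
      -- (i) task jump between unloaded sites
      (∀ k l, k ≠ j → l ≠ j → k ≠ l → 1 ≤ n k →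
        π j n * β k l (n k) (n l) j =
          π j (move n k l) * β l k (n l + 1) (n k - 1) j) ∧
      -- (ii) task jump from the loaded site
      (∀ k, k ≠ j → 1 ≤ n j →
        π j n * θ j k (n j) (n k) =
          π j (move n j k) * (θ k j (n k + 1) (n j - 1) * gam j (n j - 1))) ∧
      -- (iii) task jump to the loaded site
      (∀ k, k ≠ j → 1 ≤ n k →
        π j n * (θ k j (n k) (n j) * gam j (n j)) =
          π j (move n k j) * θ j k (n j + 1) (n k - 1)) ∧
      -- (iv) leap of the distinguished customer
      (∀ j', j' ≠ j →
        π j n * (gamBar j (n j))⁻¹ * τ j j' n =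
          π j' n * (gamBar j' (n j'))⁻¹ * τ j' j n) := by
  intro j n hn
  have hgamBarpos : ∀ i m, 0 < gamBar i m := by
    intro i m
    rw [hgamBar]
    exact Finset.prod_pos (fun u _ => hgam i u)
  refine ⟨?_, ?_, ?_, ?_⟩
  · intro k l hkj hlj hkl hk
    have hsum : ∑ s, move n k l s = N := by rw [move_sum n k l hkl hk, hn]
    have hmj : move n k l j = n j := by
      simp [move, (Ne.symm hkj), (Ne.symm hlj)]
    rw [hπ j n hn, hπ j (move n k l) hsum, hmj, hβ k l j (n k) (n l) hkl hkj hlj hk]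
  · intro k hkj hj
    have hjk : j ≠ k := Ne.symm hkj
    have hsum : ∑ s, move n j k s = N := by rw [move_sum n j k hjk hj, hn]
    have hmj : move n j k j = n j - 1 := by simp [move, hjk]
    rw [hπ j n hn, hπ j (move n j k) hsum, hmj, hθ j k (n j) (n k) hkj hj]
    have hprod : gamBar j (n j - 1) * gam j (n j - 1) = gamBar j (n j) := by
      rw [hgamBar, hgamBar]
      conv_rhs => rw [show n j = (n j - 1) + 1 from (Nat.succ_pred_eq_of_pos hj).symm]
      rw [Finset.prod_range_succ]
    rw [← hprod]
    ring
  · intro k hkj hk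
    have hsum : ∑ s, move n k j s = N := by rw [move_sum n k j hkj hk, hn]
    have hmj : move n k j j = n j + 1 := by simp [move, Ne.symm hkj]
    rw [hπ j n hn, hπ j (move n k j) hsum, hmj, hθ k j (n k) (n j) (Ne.symm hkj) hk]
    have hprod : gamBar j (n j + 1) = gamBar j (n j) * gam j (n j) := by
      rw [hgamBar, hgamBar, Finset.prod_range_succ]
    rw [hprod]
    ring
  · intro j' hj'
    rw [hπ j n hn, hπ j' n hn, hτ j j' n (Ne.symm hj')]
    have h1 : (gamBar j (n j)) ≠ 0 := ne_of_gt (hgamBarpos j (n j))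
    have h2 : (gamBar j' (n j')) ≠ 0 := ne_of_gt (hgamBarpos j' (n j'))
    field_simp
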